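/- Let R be a rectangle with dimensions (x,y). Then the number of sets in F_0(R) satisfies |F_0(R)| ≤ Σ_{r=1}^{y} 8^y · C(y−1, r−1) · x^r, where C(n,k) is the binomial coefficient. -/

import Mathlib

open Real

def nbhd : Finset (ℤ × ℤ) := {(-2,0), (-1,0), (0,-1), (0,1), (1,0), (2,0)}

def bootOp (N : Finset (ℤ × ℤ)) (r : ℕ) (S : Set (ℤ × ℤ)) : Set (ℤ × ℤ) :=
  S ∪ {v | r ≤ (((fun n => v + n) '' (N : Set (ℤ × ℤ))) ∩ S).ncard}

def bsClosure (N : Finset (ℤ × ℤ)) (r : ℕ) (S : Set (ℤ × ℤ)) : Set (ℤ × ℤ) :=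
  ⋃ t : ℕ, (bootOp N r)^[t] S

noncomputable def rectF (a b c d : ℤ) : Finset (ℤ × ℤ) := Finset.Icc a b ×ˢ Finset.Icc c d

open Classical in
noncomputable def prob (F : Finset (ℤ × ℤ)) (p : ℝ) (E : Set (ℤ × ℤ) → Prop) : ℝ :=
  ∑ T ∈ F.powerset, if E (T : Set (ℤ × ℤ)) then p ^ T.card * (1 - p) ^ (F.card - T.card) else 0

def internallyFilled (N : Finset (ℤ × ℤ)) (r : ℕ) (R S : Set (ℤ × ℤ)) : Prop :=
  R ⊆ bsClosure N r (S ∩ R)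

def upTrav (a b c d : ℤ) (S : Set (ℤ × ℤ)) : Prop :=
  (rectF a b c d : Set (ℤ × ℤ)) ⊆
    bsClosure nbhd 3 (((rectF a b c d : Set (ℤ × ℤ)) ∩ S) ∪ (rectF a b (c-1) (c-1) : Set (ℤ × ℤ)))

def spanningPair (a b c : ℤ) (P : Set (ℤ × ℤ)) : Prop :=
  (rectF a b c c : Set (ℤ × ℤ)) ⊆ bsClosure nbhd 3 (P ∪ (rectF a b (c-1) (c-1) : Set (ℤ × ℤ)))

def F0 (a b c d : ℤ) : Set (Set (ℤ × ℤ)) :=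
  {A | A ⊆ (rectF a b c d : Set (ℤ × ℤ)) ∧ upTrav a b c d A ∧
    (∀ A' : Set (ℤ × ℤ), A' ⊂ A → ¬ upTrav a b c d A') ∧
    ∀ j : ℤ, c ≤ j → j ≤ d →
      ∃ u v : ℤ × ℤ, u ∈ A ∧ v ∈ A ∧ u ≠ v ∧ spanningPair a b j {u, v}}

def U0 (a b c d : ℤ) : Set (Set (ℤ × ℤ)) := {S | ∃ A ∈ F0 a b c d, A ⊆ S}

set_option linter.unreachableTactic false
set_option linter.unusedTactic false
set_option linter.unnecessarySeqFocus false
set_option linter.unnecessarySimpa false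

variable {N : Finset (ℤ × ℤ)} {r : ℕ} {S T U : Set (ℤ × ℤ)}

lemma subset_bootOp : S ⊆ bootOp N r S := Set.subset_union_left

lemma bootOp_mono (h : S ⊆ T) : bootOp N r S ⊆ bootOp N r T := by
  apply Set.union_subset_union h
  intro v hv
  simp only [Set.mem_setOf_eq] at *
  calc r ≤ _ := hv
    _ ≤ _ := Set.ncard_le_ncard (Set.inter_subset_inter_right _ h)
      (((N : Set (ℤ×ℤ)).toFinite.image _).inter_of_left _)

lemma iterate_mono (h : S ⊆ T) (t : ℕ) : (bootOp N r)^[t] S ⊆ (bootOp N r)^[t] T := by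
  induction t with
  | zero => exact h
  | succ n ih => rw [Function.iterate_succ_apply', Function.iterate_succ_apply']
                 exact bootOp_mono ih

lemma subset_iterate (t : ℕ) : S ⊆ (bootOp N r)^[t] S := by
  induction t with
  | zero => exact le_refl _
  | succ n ih => rw [Function.iterate_succ_apply']
                 exact ih.trans (subset_bootOp.trans (le_refl _))

lemma subset_bsClosure : S ⊆ bsClosure N r S := Set.subset_iUnion_of_subset 0 (le_refl _)

lemma iterate_subset_bsClosure (t : ℕ) : (bootOp N r)^[t] S ⊆ bsClosure N r S :=
  Set.subset_iUnion_of_subset t (le_refl _)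

lemma bsClosure_mono (h : S ⊆ T) : bsClosure N r S ⊆ bsClosure N r T :=
  Set.iUnion_mono fun t => iterate_mono h t

lemma bsClosure_subset_of_closed (hS : S ⊆ U) (hU : bootOp N r U ⊆ U) :
    bsClosure N r S ⊆ U := by
  apply Set.iUnion_subset
  intro t
  induction t with
  | zero => exact hS
  | succ n ih => rw [Function.iterate_succ_apply']
                 exact (bootOp_mono ih).trans hU

lemma iterate_le_iterate (s t : ℕ) (h : s ≤ t) : (bootOp N r)^[s] S ⊆ (bootOp N r)^[t] S := by
  obtain ⟨k, rfl⟩ := Nat.exists_eq_add_of_le h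
  rw [add_comm, Function.iterate_add_apply]
  exact subset_iterate k

lemma bootOp_bsClosure : bootOp N r (bsClosure N r S) ⊆ bsClosure N r S := by
  rintro v (hv | hv)
  · exact hv
  simp only [Set.mem_setOf_eq] at hv
  set W := ((fun n => v + n) '' (N : Set (ℤ×ℤ))) ∩ bsClosure N r S with hW
  have hWfin : W.Finite := ((N : Set (ℤ×ℤ)).toFinite.image _).inter_of_left _
  have : ∃ t, W ⊆ (bootOp N r)^[t] S := by
    have hsub : W ⊆ ⋃ t : ℕ, (bootOp N r)^[t] S := Set.inter_subset_right
    classical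
    set g : ℤ × ℤ → ℕ := fun w => if h : ∃ t, w ∈ (bootOp N r)^[t] S then Nat.find h else 0
      with hg
    refine ⟨hWfin.toFinset.sup g, fun w hw => ?_⟩
    have hex : ∃ t, w ∈ (bootOp N r)^[t] S := Set.mem_iUnion.mp (hsub hw)
    have h1 : w ∈ (bootOp N r)^[g w] S := by
      rw [hg]; simp only [hex, dif_pos]; exact Nat.find_spec hex
    exact iterate_le_iterate _ _ (Finset.le_sup (hWfin.mem_toFinset.mpr hw)) h1
  obtain ⟨t, ht⟩ := this
  apply iterate_subset_bsClosure (t+1)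
  rw [Function.iterate_succ_apply']
  right
  simp only [Set.mem_setOf_eq]
  calc r ≤ W.ncard := hv
    _ ≤ _ := Set.ncard_le_ncard (Set.subset_inter Set.inter_subset_left ht)
      (((N : Set (ℤ×ℤ)).toFinite.image _).inter_of_left _)

lemma bsClosure_trans (h : S ⊆ bsClosure N r T) : bsClosure N r S ⊆ bsClosure N r T :=
  bsClosure_subset_of_closed h bootOp_bsClosure

def Dset : Finset (ℤ × ℤ) := {(1,0),(2,0),(3,0),(4,0),(-2,1),(-1,1),(1,1),(2,1)}

lemma himg (w : ℤ × ℤ) : ((fun n => w + n) '' (nbhd : Set (ℤ × ℤ))) =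
    {w+(-2,0), w+(-1,0), w+(0,-1), w+(0,1), w+(1,0), w+(2,0)} := by
  simp [nbhd, Set.image_insert_eq]

lemma pair_ncard_le (p q : ℤ × ℤ) (S : Set (ℤ × ℤ)) (h : S ⊆ {p, q}) : S.ncard ≤ 2 := by
  calc S.ncard ≤ ({p, q} : Set (ℤ × ℤ)).ncard :=
        Set.ncard_le_ncard h ((Set.finite_singleton q).insert p)
    _ ≤ 2 := le_trans (Set.ncard_insert_le _ _) (by simp)

lemma spanningPair_structure (a b j : ℤ) (u v : ℤ × ℤ) (hne : u ≠ v)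
    (hsp : spanningPair a b j {u, v}) :
    (∃ δ ∈ Dset, (u.2 = j ∧ v = u + δ) ∨ (v.2 = j ∧ u = v + δ)) ∨
      (rectF a b j j : Set (ℤ × ℤ)) ⊆ {u, v} := by
  by_cases hgood : ∃ δ ∈ Dset, (u.2 = j ∧ v = u + δ) ∨ (v.2 = j ∧ u = v + δ)
  · exact Or.inl hgood
  right
  set U : Set (ℤ × ℤ) := {w | w.2 < j} ∪ {u, v} with hU
  have hclosed : bootOp nbhd 3 U ⊆ U := by
    rintro w (hw | hw)
    · exact hw
    simp only [Set.mem_setOf_eq] at hw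
    by_contra hwU
    have hw2 : ¬ w.2 < j := fun h => hwU (Or.inl h)
    have hwu : w ≠ u := fun h => hwU (Or.inr (Or.inl h))
    have hwv : w ≠ v := fun h => hwU (Or.inr (Or.inr h))
    rcases lt_or_eq_of_le (not_lt.mp hw2) with hj | hj
    · -- w.2 > j : neighbours in U are only u, v
      have hsub : ((fun n => w + n) '' (nbhd : Set (ℤ × ℤ))) ∩ U ⊆ {u, v} := by
        rintro z ⟨hz1, hz2⟩
        rcases hz2 with h | h
        · exfalso
          rw [himg] at hz1
          simp only [Set.mem_insert_iff, Set.mem_singleton_iff] at hz1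
          simp only [Set.mem_setOf_eq] at h
          rcases hz1 with rfl|rfl|rfl|rfl|rfl|rfl <;> simp [Prod.snd_add] at h <;> omega
        · exact h
      have := pair_ncard_le u v _ hsub
      omega
    · -- w.2 = j
      have hw2 : w.2 = j := hj.symm
      have hB : w + (0,-1) ∈ U := by
        left; simp only [Set.mem_setOf_eq, Prod.snd_add, hw2]; omega
      have hkey : ((fun n => w + n) '' (nbhd : Set (ℤ × ℤ))) ∩ U ⊆ {w + (0,-1), u, v} := by
        rintro z ⟨hz1, hz2⟩
        rcases hz2 with h | h
        · rw [himg] at hz1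
          simp only [Set.mem_insert_iff, Set.mem_singleton_iff] at hz1
          simp only [Set.mem_setOf_eq] at h
          rcases hz1 with rfl|rfl|rfl|rfl|rfl|rfl <;>
            first
            | (left; rfl)
            | (exfalso; simp only [Prod.snd_add, hw2] at h; omega)
        · exact Or.inr h
      have hnot : ¬ ((u ∈ ((fun n => w + n) '' (nbhd : Set (ℤ × ℤ))) ∧ u ≠ w + (0,-1)) ∧
          (v ∈ ((fun n => w + n) '' (nbhd : Set (ℤ × ℤ))) ∧ v ≠ w + (0,-1))) := by
        rintro ⟨⟨hui, hub⟩, ⟨hvi, hvb⟩⟩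
        rw [himg] at hui hvi
        simp only [Set.mem_insert_iff, Set.mem_singleton_iff] at hui hvi
        rcases hui with hu|hu|hu|hu|hu|hu
        · rcases hvi with hv|hv|hv|hv|hv|hv
          · exact hne (hu.trans hv.symm)
          · exact hgood ⟨((1:ℤ),(0:ℤ)), by decide, Or.inl ⟨by simp [hu, hw2], by rw [hv, hu]; simp [Prod.ext_iff] <;> omega⟩⟩
          · exact hvb hv
          · exact hgood ⟨((2:ℤ),(1:ℤ)), by decide, Or.inl ⟨by simp [hu, hw2], by rw [hv, hu]; simp [Prod.ext_iff] <;> omega⟩⟩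
          · exact hgood ⟨((3:ℤ),(0:ℤ)), by decide, Or.inl ⟨by simp [hu, hw2], by rw [hv, hu]; simp [Prod.ext_iff] <;> omega⟩⟩
          · exact hgood ⟨((4:ℤ),(0:ℤ)), by decide, Or.inl ⟨by simp [hu, hw2], by rw [hv, hu]; simp [Prod.ext_iff] <;> omega⟩⟩
        · rcases hvi with hv|hv|hv|hv|hv|hv
          · exact hgood ⟨((1:ℤ),(0:ℤ)), by decide, Or.inr ⟨by simp [hv, hw2], by rw [hv, hu]; simp [Prod.ext_iff] <;> omega⟩⟩
          · exact hne (hu.trans hv.symm)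
          · exact hvb hv
          · exact hgood ⟨((1:ℤ),(1:ℤ)), by decide, Or.inl ⟨by simp [hu, hw2], by rw [hv, hu]; simp [Prod.ext_iff] <;> omega⟩⟩
          · exact hgood ⟨((2:ℤ),(0:ℤ)), by decide, Or.inl ⟨by simp [hu, hw2], by rw [hv, hu]; simp [Prod.ext_iff] <;> omega⟩⟩
          · exact hgood ⟨((3:ℤ),(0:ℤ)), by decide, Or.inl ⟨by simp [hu, hw2], by rw [hv, hu]; simp [Prod.ext_iff] <;> omega⟩⟩
        · exact hub hu
        · rcases hvi with hv|hv|hv|hv|hv|hv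
          · exact hgood ⟨((2:ℤ),(1:ℤ)), by decide, Or.inr ⟨by simp [hv, hw2], by rw [hv, hu]; simp [Prod.ext_iff] <;> omega⟩⟩
          · exact hgood ⟨((1:ℤ),(1:ℤ)), by decide, Or.inr ⟨by simp [hv, hw2], by rw [hv, hu]; simp [Prod.ext_iff] <;> omega⟩⟩
          · exact hvb hv
          · exact hne (hu.trans hv.symm)
          · exact hgood ⟨((-1:ℤ),(1:ℤ)), by decide, Or.inr ⟨by simp [hv, hw2], by rw [hv, hu]; simp [Prod.ext_iff] <;> omega⟩⟩
          · exact hgood ⟨((-2:ℤ),(1:ℤ)), by decide, Or.inr ⟨by simp [hv, hw2], by rw [hv, hu]; simp [Prod.ext_iff] <;> omega⟩⟩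
        · rcases hvi with hv|hv|hv|hv|hv|hv
          · exact hgood ⟨((3:ℤ),(0:ℤ)), by decide, Or.inr ⟨by simp [hv, hw2], by rw [hv, hu]; simp [Prod.ext_iff] <;> omega⟩⟩
          · exact hgood ⟨((2:ℤ),(0:ℤ)), by decide, Or.inr ⟨by simp [hv, hw2], by rw [hv, hu]; simp [Prod.ext_iff] <;> omega⟩⟩
          · exact hvb hv
          · exact hgood ⟨((-1:ℤ),(1:ℤ)), by decide, Or.inl ⟨by simp [hu, hw2], by rw [hv, hu]; simp [Prod.ext_iff] <;> omega⟩⟩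
          · exact hne (hu.trans hv.symm)
          · exact hgood ⟨((1:ℤ),(0:ℤ)), by decide, Or.inl ⟨by simp [hu, hw2], by rw [hv, hu]; simp [Prod.ext_iff] <;> omega⟩⟩
        · rcases hvi with hv|hv|hv|hv|hv|hv
          · exact hgood ⟨((4:ℤ),(0:ℤ)), by decide, Or.inr ⟨by simp [hv, hw2], by rw [hv, hu]; simp [Prod.ext_iff] <;> omega⟩⟩
          · exact hgood ⟨((3:ℤ),(0:ℤ)), by decide, Or.inr ⟨by simp [hv, hw2], by rw [hv, hu]; simp [Prod.ext_iff] <;> omega⟩⟩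
          · exact hvb hv
          · exact hgood ⟨((-2:ℤ),(1:ℤ)), by decide, Or.inl ⟨by simp [hu, hw2], by rw [hv, hu]; simp [Prod.ext_iff] <;> omega⟩⟩
          · exact hgood ⟨((1:ℤ),(0:ℤ)), by decide, Or.inr ⟨by simp [hv, hw2], by rw [hv, hu]; simp [Prod.ext_iff] <;> omega⟩⟩
          · exact hne (hu.trans hv.symm)
      have h2 : ((fun n => w + n) '' (nbhd : Set (ℤ × ℤ))) ∩ U ⊆ {w + (0,-1), u} ∨
          ((fun n => w + n) '' (nbhd : Set (ℤ × ℤ))) ∩ U ⊆ {w + (0,-1), v} := by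
        by_cases hv' : v ∈ ((fun n => w + n) '' (nbhd : Set (ℤ × ℤ))) ∧ v ≠ w + (0,-1)
        · right
          intro z hz
          rcases hkey hz with h | h | h
          · exact Or.inl h
          · subst h
            by_cases hub : z = w + (0,-1)
            · exact Or.inl hub
            · exact absurd ⟨⟨hz.1, hub⟩, hv'⟩ hnot
          · exact Or.inr h
        · left
          intro z hz
          rcases hkey hz with h | h | h
          · exact Or.inl h
          · exact Or.inr h
          · subst h
            rcases not_and_or.mp hv' with h' | h'
            · exact absurd hz.1 h'
            · exact Or.inl (not_not.mp h')
      rcases h2 with h2 | h2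
      · have := pair_ncard_le _ _ _ h2; omega
      · have := pair_ncard_le _ _ _ h2; omega
  have hstart : ({u, v} : Set (ℤ × ℤ)) ∪ (rectF a b (j-1) (j-1) : Set (ℤ × ℤ)) ⊆ U := by
    apply Set.union_subset
    · exact Set.subset_union_right
    · intro z hz
      left
      simp only [rectF, Finset.coe_product, Set.mem_prod, Finset.mem_coe, Finset.mem_Icc] at hz
      simp only [Set.mem_setOf_eq]
      omega
  have hfin := bsClosure_subset_of_closed hstart hclosed
  intro z hz
  have hz2 : z.2 = j := by
    simp only [rectF, Finset.coe_product, Set.mem_prod, Finset.mem_coe, Finset.mem_Icc] at hz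
    omega
  rcases hfin (hsp hz) with h | h
  · exfalso; simp only [Set.mem_setOf_eq, hz2] at h; omega
  · exact h

lemma mem_rect {a b c d : ℤ} {w : ℤ × ℤ} :
    w ∈ (rectF a b c d : Set (ℤ × ℤ)) ↔ a ≤ w.1 ∧ w.1 ≤ b ∧ c ≤ w.2 ∧ w.2 ≤ d := by
  simp only [rectF, Finset.coe_product, Set.mem_prod, Finset.mem_coe, Finset.mem_Icc]
  tauto

lemma upTrav_of_pairs (a b c d : ℤ) (P : Set (ℤ × ℤ)) (hP : P ⊆ (rectF a b c d : Set (ℤ × ℤ)))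
    (hpairs : ∀ j, c ≤ j → j ≤ d → ∃ Q, Q ⊆ P ∧ spanningPair a b j Q) :
    upTrav a b c d P := by
  have hPeq : (rectF a b c d : Set (ℤ × ℤ)) ∩ P = P := Set.inter_eq_self_of_subset_right hP
  unfold upTrav
  rw [hPeq]
  set Z := bsClosure nbhd 3 (P ∪ (rectF a b (c-1) (c-1) : Set (ℤ × ℤ))) with hZ
  have hbase : P ∪ (rectF a b (c-1) (c-1) : Set (ℤ × ℤ)) ⊆ Z := subset_bsClosure
  have key : ∀ n : ℕ, ∀ j, c ≤ j → j ≤ d → (j - c).toNat ≤ n →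
      (rectF a b j j : Set (ℤ × ℤ)) ⊆ Z := by
    intro n
    induction n with
    | zero =>
      intro j h1 h2 h3
      have hj : j = c := by omega
      rw [hj]
      obtain ⟨Q, hQP, hsp⟩ := hpairs c le_rfl (by omega)
      refine hsp.trans (bsClosure_trans (Set.union_subset ?_ ?_))
      · exact (hQP.trans Set.subset_union_left).trans hbase
      · exact Set.subset_union_right.trans hbase
    | succ n ih =>
      intro j h1 h2 h3
      obtain ⟨Q, hQP, hsp⟩ := hpairs j h1 h2
      refine hsp.trans (bsClosure_trans (Set.union_subset ?_ ?_))
      · exact (hQP.trans Set.subset_union_left).trans hbase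
      · by_cases hj : j = c
        · rw [hj]; exact Set.subset_union_right.trans hbase
        · exact ih (j-1) (by omega) (by omega) (by omega)
  intro w hw
  rw [mem_rect] at hw
  exact key (w.2 - c).toNat w.2 hw.2.2.1 hw.2.2.2 le_rfl (mem_rect.mpr ⟨hw.1, hw.2.1, le_rfl, le_rfl⟩)

lemma F0_eq_union {a b c d : ℤ} {A P : Set (ℤ × ℤ)} (hA : A ∈ F0 a b c d)
    (hPA : P ⊆ A) (hup : upTrav a b c d P) : P = A := by
  by_contra hne
  exact hA.2.2.1 P ⟨hPA, fun h => hne (le_antisymm hPA h)⟩ hup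

lemma row_pair {a b c d : ℤ} {A : Set (ℤ × ℤ)} (hab : a < b) (hA : A ∈ F0 a b c d)
    (j : ℤ) (h1 : c ≤ j) (h2 : j ≤ d) :
    ∃ q : ℤ × (ℤ × ℤ), q.1 ∈ Finset.Icc a b ∧ q.2 ∈ Dset ∧
      ({((q.1, j) : ℤ × ℤ), (q.1, j) + q.2} : Set (ℤ × ℤ)) ⊆ A ∧
      spanningPair a b j {((q.1, j) : ℤ × ℤ), (q.1, j) + q.2} := by
  obtain ⟨u, v, hu, hv, hne, hsp⟩ := hA.2.2.2 j h1 h2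
  rcases spanningPair_structure a b j u v hne hsp with ⟨δ, hδ, hcase⟩ | hdeg
  · rcases hcase with ⟨h2', hvd⟩ | ⟨h2', hud⟩
    · have hu' : ((u.1, j) : ℤ × ℤ) = u := by rw [← h2']
      have hset : ({((u.1, j) : ℤ × ℤ), (u.1, j) + δ} : Set (ℤ × ℤ)) = {u, v} := by
        rw [hu', ← hvd]
      have hq1 : u.1 ∈ Finset.Icc a b := by
        have := hA.1 hu; rw [mem_rect] at this; exact Finset.mem_Icc.mpr ⟨this.1, this.2.1⟩
      exact ⟨(u.1, δ), hq1, hδ,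
        by rw [hset]; exact Set.insert_subset_iff.mpr ⟨hu, Set.singleton_subset_iff.mpr hv⟩,
        by rw [hset]; exact hsp⟩
    · have hv' : ((v.1, j) : ℤ × ℤ) = v := by rw [← h2']
      have hset : ({((v.1, j) : ℤ × ℤ), (v.1, j) + δ} : Set (ℤ × ℤ)) = {u, v} := by
        rw [hv', ← hud, Set.pair_comm]
      have hq1 : v.1 ∈ Finset.Icc a b := by
        have := hA.1 hv; rw [mem_rect] at this; exact Finset.mem_Icc.mpr ⟨this.1, this.2.1⟩
      exact ⟨(v.1, δ), hq1, hδ,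
        by rw [hset]; exact Set.insert_subset_iff.mpr ⟨hu, Set.singleton_subset_iff.mpr hv⟩,
        by rw [hset]; exact hsp⟩
  · have ha1 : ((a, j) : ℤ × ℤ) ∈ ({u, v} : Set (ℤ × ℤ)) :=
      hdeg (mem_rect.mpr ⟨le_rfl, le_of_lt hab, le_rfl, le_rfl⟩)
    have ha2 : ((a+1, j) : ℤ × ℤ) ∈ ({u, v} : Set (ℤ × ℤ)) :=
      hdeg (mem_rect.mpr ⟨by omega, by omega, le_rfl, le_rfl⟩)
    simp only [Set.mem_insert_iff, Set.mem_singleton_iff] at ha1 ha2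
    have hcontra : ¬ (((a, j) : ℤ × ℤ) = ((a+1, j) : ℤ × ℤ)) := by
      simp [Prod.ext_iff]
    have hseteq : ({((a, j) : ℤ × ℤ), ((a+1, j) : ℤ × ℤ)} : Set (ℤ × ℤ)) = {u, v} := by
      rcases ha1 with e1 | e1 <;> rcases ha2 with e2 | e2
      · exact absurd (e1.trans e2.symm) hcontra
      · rw [e1, e2]
      · rw [Set.pair_comm, e1, e2]
      · exact absurd (e1.trans e2.symm) hcontra
    have hadd : ((a, j) : ℤ × ℤ) + (1, 0) = ((a+1, j) : ℤ × ℤ) := by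
      simp [Prod.ext_iff]
    refine ⟨(a, (1, 0)), by simp [Finset.mem_Icc]; omega, show ((1:ℤ),(0:ℤ)) ∈ Dset by decide, ?_, ?_⟩
    · show ({((a, j) : ℤ × ℤ), (a, j) + (1, 0)} : Set (ℤ × ℤ)) ⊆ A
      rw [hadd, hseteq]
      exact Set.insert_subset_iff.mpr ⟨hu, Set.singleton_subset_iff.mpr hv⟩
    · show spanningPair a b j {((a, j) : ℤ × ℤ), (a, j) + (1, 0)}
      rw [hadd, hseteq]
      exact hsp

theorem stmt10 (a c : ℤ) (x y : ℕ) (hx : 1 ≤ x) (hy : 1 ≤ y) :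
    (F0 a (a + (x:ℤ) - 1) c (c + (y:ℤ) - 1)).ncard ≤
      ∑ r ∈ Finset.Icc 1 y, 8^y * Nat.choose (y-1) (r-1) * x^r := by
  set b := a + (x:ℤ) - 1 with hb
  set d := c + (y:ℤ) - 1 with hd
  rcases eq_or_lt_of_le hx with h1 | h2
  · -- x = 1
    have hsub : F0 a b c d ⊆ {(rectF a b c d : Set (ℤ × ℤ))} := by
      intro A hA
      simp only [Set.mem_singleton_iff]
      apply Set.Subset.antisymm hA.1
      intro w hw
      rw [mem_rect] at hw
      obtain ⟨u, v, hu, hv, hne, hsp⟩ := hA.2.2.2 w.2 hw.2.2.1 hw.2.2.2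
      rcases spanningPair_structure a b w.2 u v hne hsp with ⟨δ, hδ, hcase⟩ | hdeg
      · rcases hcase with ⟨h2', _⟩ | ⟨h2', _⟩
        · have hur := hA.1 hu; rw [mem_rect] at hur
          have hwu : w = u := by
            rw [Prod.ext_iff]; exact ⟨by omega, by omega⟩
          rw [hwu]; exact hu
        · have hvr := hA.1 hv; rw [mem_rect] at hvr
          have hwv : w = v := by
            rw [Prod.ext_iff]; exact ⟨by omega, by omega⟩
          rw [hwv]; exact hv
      · have hmem : w ∈ ({u, v} : Set (ℤ × ℤ)) :=
          hdeg (mem_rect.mpr ⟨hw.1, hw.2.1, le_rfl, le_rfl⟩)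
        rcases hmem with h | h
        · rw [h]; exact hu
        · rw [h]; exact hv
    calc (F0 a b c d).ncard ≤ ({(rectF a b c d : Set (ℤ × ℤ))} : Set (Set (ℤ × ℤ))).ncard :=
          Set.ncard_le_ncard hsub (Set.finite_singleton _)
      _ = 1 := Set.ncard_singleton _
      _ ≤ 8^y * Nat.choose (y-1) (1-1) * x^1 := by
          have hc : Nat.choose (y-1) (1-1) = 1 := Nat.choose_zero_right _
          have hpos : 0 < 8^y * Nat.choose (y-1) (1-1) * x^1 := by
            rw [hc, pow_one]
            exact Nat.mul_pos (by simpa using pow_pos (by norm_num : 0 < 8) y) hx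
          omega
      _ ≤ _ := Finset.single_le_sum (f := fun r => 8^y * Nat.choose (y-1) (r-1) * x^r)
            (fun i _ => Nat.zero_le _) (Finset.mem_Icc.mpr ⟨le_rfl, hy⟩)
  · -- x ≥ 2
    have hab : a < b := by omega
    classical
    set T : Finset (Fin y → ℤ × (ℤ × ℤ)) :=
      Fintype.piFinset (fun _ => (Finset.Icc a b) ×ˢ Dset) with hT
    set f : (Fin y → ℤ × (ℤ × ℤ)) → Set (ℤ × ℤ) := fun g =>
      ⋃ i : Fin y, ({(((g i).1, c + (i.val : ℤ)) : ℤ × ℤ),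
        ((g i).1, c + (i.val : ℤ)) + (g i).2} : Set (ℤ × ℤ)) with hf
    have hsub : F0 a b c d ⊆ f '' (T : Set (Fin y → ℤ × (ℤ × ℤ))) := by
      intro A hA
      have hrow : ∀ i : Fin y, ∃ q : ℤ × (ℤ × ℤ), q.1 ∈ Finset.Icc a b ∧ q.2 ∈ Dset ∧
          ({((q.1, c + (i.val : ℤ)) : ℤ × ℤ), (q.1, c + (i.val : ℤ)) + q.2} : Set (ℤ × ℤ)) ⊆ A ∧
          spanningPair a b (c + (i.val : ℤ))
            {((q.1, c + (i.val : ℤ)) : ℤ × ℤ), (q.1, c + (i.val : ℤ)) + q.2} := by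
        intro i
        exact row_pair hab hA _ (by omega) (by have := i.2; omega)
      choose g hg1 hg2 hg3 hg4 using hrow
      refine ⟨g, ?_, ?_⟩
      · simp only [hT, Fintype.mem_piFinset, Finset.mem_coe, Finset.mem_product]
        exact fun i => ⟨hg1 i, hg2 i⟩
      · have hPA : f g ⊆ A := Set.iUnion_subset hg3
        apply F0_eq_union hA hPA
        apply upTrav_of_pairs _ _ _ _ _ (hPA.trans hA.1)
        intro j hj1 hj2
        have hjy : (j - c).toNat < y := by omega
        set i : Fin y := ⟨(j - c).toNat, hjy⟩ with hi
        have hji : c + (i.val : ℤ) = j := by simp only [hi]; omega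
        refine ⟨_, Set.subset_iUnion
          (fun i : Fin y => ({(((g i).1, c + (i.val : ℤ)) : ℤ × ℤ),
            ((g i).1, c + (i.val : ℤ)) + (g i).2} : Set (ℤ × ℤ))) i, ?_⟩
        rw [← hji]
        exact hg4 i
    have hTcard : T.card = (x * 8)^y := by
      rw [hT, Fintype.card_piFinset]
      have hIcc : (Finset.Icc a b).card = x := by
        rw [Int.card_Icc]; omega
      simp [Finset.card_product, hIcc, show Dset.card = 8 from rfl]
    calc (F0 a b c d).ncard
        ≤ (f '' (T : Set (Fin y → ℤ × (ℤ × ℤ)))).ncard :=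
          Set.ncard_le_ncard hsub (T.finite_toSet.image f)
      _ ≤ (T : Set (Fin y → ℤ × (ℤ × ℤ))).ncard := Set.ncard_image_le T.finite_toSet
      _ = T.card := Set.ncard_coe_finset T
      _ = (x * 8)^y := hTcard
      _ = 8^y * Nat.choose (y-1) (y-1) * x^y := by rw [Nat.choose_self]; ring
      _ ≤ _ := Finset.single_le_sum (f := fun r => 8^y * Nat.choose (y-1) (r-1) * x^r)
            (fun i _ => Nat.zero_le _) (Finset.mem_Icc.mpr ⟨hy, le_rfl⟩)
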